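/- Let α < 0 and β ∈ ℝ. If θ : [0,∞) → ℝ is differentiable with θ′(t) = α·θ(t) + β·θ(t)² for all t ≥ 0 and θ(0) ≤ 0, then θ(ξ) ≤ 0 for all ξ > 0. -/

import Mathlib

open Set

/-- Riccati comparison lemma: if `α < 0`, `β ∈ ℝ`, and `θ` solves
`θ′(t) = α·θ(t) + β·θ(t)²` for `t ≥ 0` with `θ(0) ≤ 0`, then
`θ(ξ) ≤ 0` for all `ξ > 0`. -/
theorem riccati_nonpos (α β : ℝ) (hα : α < 0) (θ : ℝ → ℝ)
    (hθ : ∀ t ≥ (0:ℝ), HasDerivAt θ (α * θ t + β * θ t ^ 2) t)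
    (h0 : θ 0 ≤ 0) :
    ∀ ξ > (0:ℝ), θ ξ ≤ 0 := by
  intro ξ hξ
  by_contra hpos
  push_neg at hpos
  have hcont : ContinuousOn θ (Icc 0 ξ) := fun t ht =>
    ((hθ t ht.1).continuousAt).continuousWithinAt
  -- bound on θ over [0, ξ]
  obtain ⟨C, hC⟩ := (isCompact_Icc (a := (0:ℝ)) (b := ξ)).exists_bound_of_continuousOn hcont
  set M : ℝ := max C 1 with hM
  have hM1 : (1:ℝ) ≤ M := le_max_right _ _
  have hM0 : (0:ℝ) ≤ M := le_trans zero_le_one hM1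
  have hbound : ∀ t ∈ Icc (0:ℝ) ξ, θ t ∈ Icc (-M) M := by
    intro t ht
    have := hC t ht
    rw [Real.norm_eq_abs] at this
    have : |θ t| ≤ M := this.trans (le_max_left _ _)
    exact ⟨neg_le_of_abs_le this, le_of_abs_le this⟩
  -- the last time on [0, ξ] at which θ is nonpositive
  set S : Set ℝ := {t | t ∈ Icc (0:ℝ) ξ ∧ θ t ≤ 0} with hSdef
  have hS0 : (0:ℝ) ∈ S := ⟨⟨le_refl 0, hξ.le⟩, h0⟩
  have hSne : S.Nonempty := ⟨0, hS0⟩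
  have hSbd : BddAbove S := ⟨ξ, fun t ht => ht.1.2⟩
  have hSclosed : IsClosed S := by
    have : S = Icc 0 ξ ∩ θ ⁻¹' Iic 0 := by
      ext t; simp [hSdef, Set.mem_setOf_eq, and_comm]
    rw [this]
    exact hcont.preimage_isClosed_of_isClosed isClosed_Icc isClosed_Iic
  set c : ℝ := sSup S with hc
  have hcS : c ∈ S := hSclosed.csSup_mem hSne hSbd
  have hc_mem : c ∈ Icc (0:ℝ) ξ := hcS.1
  have hθc_le : θ c ≤ 0 := hcS.2
  have hcξ : c < ξ := by
    rcases lt_or_eq_of_le hc_mem.2 with h | h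
    · exact h
    · exact absurd (h ▸ hθc_le) (not_le.mpr hpos)
  -- θ c = 0
  have hθc : θ c = 0 := by
    rcases lt_or_eq_of_le hθc_le with h | h
    · exfalso
      have hct : ContinuousAt θ c := (hθ c hc_mem.1).continuousAt
      have : ∀ᶠ t in nhds c, θ t < 0 := hct.eventually_lt continuousAt_const h
      obtain ⟨ε, hε, hball⟩ := Metric.eventually_nhds_iff.mp this
      set t := min (c + ε / 2) ((c + ξ) / 2) with ht
      have htc : c < t := lt_min (by linarith) (by linarith)
      have htξ : t ≤ ξ := le_trans (min_le_right _ _) (by linarith)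
      have htball : dist t c < ε := by
        rw [Real.dist_eq, abs_of_pos (by linarith)]
        have : t ≤ c + ε / 2 := min_le_left _ _
        linarith
      have : t ∈ S := ⟨⟨le_trans hc_mem.1 htc.le, htξ⟩, (hball htball).le⟩
      exact absurd (le_csSup hSbd this) (not_le.mpr htc)
    · exact h
  -- ODE uniqueness on [c, ξ] against the zero solution
  set v : ℝ → ℝ → ℝ := fun _ x => α * x + β * x ^ 2 with hv
  set K : NNReal := ⟨|α| + 2 * M * |β|, by positivity⟩ with hK
  have hlip : ∀ t, LipschitzOnWith K (v t) (Icc (-M) M) := by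
    intro t
    rw [lipschitzOnWith_iff_dist_le_mul]
    intro x hx y hy
    rw [Real.dist_eq, Real.dist_eq]
    have hxy : |x + y| ≤ 2 * M := by
      rw [abs_le]
      constructor
      · have := hx.1; have := hy.1; linarith
      · have := hx.2; have := hy.2; linarith
    have hfac : v t x - v t y = (x - y) * (α + β * (x + y)) := by
      simp only [hv]; ring
    calc |v t x - v t y| = |x - y| * |α + β * (x + y)| := by
          rw [hfac, abs_mul]
      _ ≤ |x - y| * (|α| + 2 * M * |β|) := by
          apply mul_le_mul_of_nonneg_left _ (abs_nonneg _)
          calc |α + β * (x + y)| ≤ |α| + |β * (x + y)| := abs_add_le _ _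
            _ = |α| + |β| * |x + y| := by rw [abs_mul]
            _ ≤ |α| + |β| * (2 * M) := by
                exact add_le_add le_rfl (mul_le_mul_of_nonneg_left hxy (abs_nonneg _))
            _ = |α| + 2 * M * |β| := by ring
      _ = ↑K * |x - y| := by rw [mul_comm]; rfl
  have heq : EqOn θ (fun _ => (0:ℝ)) (Icc c ξ) := by
    apply ODE_solution_unique_of_mem_Icc_right (fun t _ => hlip t)
    · exact hcont.mono (Icc_subset_Icc hc_mem.1 le_rfl)
    · intro t ht
      have ht0 : (0:ℝ) ≤ t := le_trans hc_mem.1 ht.1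
      exact ((hθ t ht0).hasDerivWithinAt)
    · intro t ht
      exact hbound t ⟨le_trans hc_mem.1 ht.1, ht.2.le⟩
    · exact continuousOn_const
    · intro t ht
      have : v t 0 = 0 := by simp [hv]
      rw [this]
      exact (hasDerivWithinAt_const t _ 0)
    · intro t ht
      exact ⟨neg_nonpos_of_nonneg hM0, hM0⟩
    · exact hθc
  have : θ ξ = 0 := heq ⟨hc_mem.2, le_rfl⟩
  linarith
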